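/- Let q, η, μ₁, μ₂, τ₁, τ₂ ∈ ℂ∖{0} with |q| < 1, μ₂ ≠ q^k μ₁ for all integers k ≥ 1, τ₁ ≠ τ₂, and |τ₁/τ₂| < |η|². Let θ(a,q) := ∏_{m=0}^∞ (1 − a q^m)(1 − q^{m+1} a⁻¹), which converges for |q| < 1 and a ≠ 0, and assume θ(μ₁τ₁,q) ≠ 0 and θ(μ₂τ₂,q) ≠ 0. Let F(z) = Σ_{k≥0} [ (η²;q)_k (η² μ₁/μ₂;q)_k / ( (q μ₁/μ₂;q)_k (q;q)_k ) ] (q η⁻² z)^k (convergent on the stated domain), and define Z(τ₁, τ₂) := [ θ(η⁻¹τ₁,q)·θ(ητ₂,q) / ( θ(μ₁τ₁,q)·θ(μ₂τ₂,q) ) ] · F(τ₁/τ₂). Then ((ητ₁ − η⁻¹τ₂)/(τ₁ − τ₂))·Z(qτ₁, τ₂) + ((ητ₂ − η⁻¹τ₁)/(τ₂ − τ₁))·Z(τ₁, qτ₂) = (μ₁ + μ₂)·Z(τ₁, τ₂), and Z(qτ₁, qτ₂) = μ₁μ₂·Z(τ₁, τ₂). -/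

import Mathlib

open Filter Topology

/-- The theta function `θ(a,q) = ∏_{m≥0} (1 − a qᵐ)(1 − q^{m+1} a⁻¹)`. -/
noncomputable def thetaFn (a q : ℂ) : ℂ :=
  ∏' m : ℕ, ((1 - a * q ^ m) * (1 - q ^ (m + 1) * a⁻¹))

/-- The q-Pochhammer symbol `(x;q)_k = ∏_{i=0}^{k-1} (1 − x qⁱ)`. -/
noncomputable def qPoch (x q : ℂ) (k : ℕ) : ℂ :=
  ∏ i ∈ Finset.range k, (1 - x * q ^ i)

/-- The vortex sum `F(z) = ₂F₁(η², η²μ₁/μ₂; qμ₁/μ₂; q; qη⁻²z)`. -/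
noncomputable def tu2VortexSum (q η μ₁ μ₂ z : ℂ) : ℂ :=
  ∑' k : ℕ, qPoch (η ^ 2) q k * qPoch (η ^ 2 * μ₁ / μ₂) q k /
    (qPoch (q * μ₁ / μ₂) q k * qPoch q q k) * (q * (η ^ 2)⁻¹ * z) ^ k

/-- The theta-dressed holomorphic block of `T[U(2)]`:
`Z(τ₁,τ₂) = θ(η⁻¹τ₁,q) θ(ητ₂,q) / (θ(μ₁τ₁,q) θ(μ₂τ₂,q)) · F(τ₁/τ₂)`. -/
noncomputable def tu2Block (q η μ₁ μ₂ τ₁ τ₂ : ℂ) : ℂ :=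
  thetaFn (η⁻¹ * τ₁) q * thetaFn (η * τ₂) q /
      (thetaFn (μ₁ * τ₁) q * thetaFn (μ₂ * τ₂) q) *
    tu2VortexSum q η μ₁ μ₂ (τ₁ / τ₂)

/-! ### Auxiliary results on infinite products -/

lemma aux_hasProd_zero {f : ℕ → ℂ} {N : ℕ} (h : f N = 0) : HasProd f 0 := by
  have he : ∀ᶠ s : Finset ℕ in atTop, (0 : ℂ) = ∏ i ∈ s, f i := by
    filter_upwards [eventually_ge_atTop ({N} : Finset ℕ)] with s hs
    exact (Finset.prod_eq_zero (hs (Finset.mem_singleton_self N)) h).symm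
  exact Tendsto.congr' he tendsto_const_nhds

lemma aux_multipliable_one_add {f : ℕ → ℂ} (hf : Summable fun n => ‖f n‖) :
    Multipliable fun n => 1 + f n := by
  by_cases h : ∃ N, 1 + f N = 0
  · obtain ⟨N, hN⟩ := h
    exact ⟨0, aux_hasProd_zero hN⟩
  · push_neg at h
    exact multipliable_one_add_of_summable hf

lemma aux_multipliable_P {x q : ℂ} (hq : ‖q‖ < 1) :
    Multipliable fun m : ℕ => 1 - x * q ^ m := by
  have := aux_multipliable_one_add (f := fun m => -(x * q ^ m)) ?_
  · exact this.congr fun m => by ring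
  · simp only [norm_neg, norm_mul, norm_pow]
    exact (summable_geometric_of_lt_one (norm_nonneg q) hq).mul_left _

lemma aux_theta_split {a q : ℂ} (hq : ‖q‖ < 1) :
    thetaFn a q = (∏' m : ℕ, (1 - a * q ^ m)) * ∏' m : ℕ, (1 - (q * a⁻¹) * q ^ m) := by
  rw [thetaFn, ← Multipliable.tprod_mul (aux_multipliable_P hq) (aux_multipliable_P hq)]
  exact tprod_congr fun m => by ring

lemma aux_P_shift {x q : ℂ} (hq : ‖q‖ < 1) :
    ∏' m : ℕ, (1 - x * q ^ m) = (1 - x) * ∏' m : ℕ, (1 - (q * x) * q ^ m) := by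
  have h1 : Multipliable fun n : ℕ => 1 - x * q ^ (n + 1) :=
    (aux_multipliable_P (x := q * x) (q := q) hq).congr fun n => by ring
  rw [tprod_eq_zero_mul' (f := fun m : ℕ => 1 - x * q ^ m) h1]
  simp only [pow_zero, mul_one]
  congr 1
  exact tprod_congr fun m => by ring

/-- Quasi-periodicity of the theta function: `θ(qa, q) = -a⁻¹ θ(a, q)`. -/
lemma aux_theta_shift {a q : ℂ} (ha : a ≠ 0) (hq0 : q ≠ 0) (hq : ‖q‖ < 1) :
    thetaFn (q * a) q = -a⁻¹ * thetaFn a q := by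
  rw [aux_theta_split hq, aux_theta_split hq]
  have h1 : q * (q * a)⁻¹ = a⁻¹ := by field_simp
  rw [h1, aux_P_shift (x := a⁻¹) hq, aux_P_shift (x := a) hq]
  have h2 : (1 - a⁻¹) = -a⁻¹ * (1 - a) := by field_simp; ring
  rw [h2]
  ring

/-! ### Auxiliary results on the vortex sum -/

/-- The coefficient of the vortex sum. -/
noncomputable def ccAux (q η μ₁ μ₂ : ℂ) (k : ℕ) : ℂ :=
  qPoch (η ^ 2) q k * qPoch (η ^ 2 * μ₁ / μ₂) q k /
    (qPoch (q * μ₁ / μ₂) q k * qPoch q q k)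

lemma aux_d2_ne {q : ℂ} (hq : ‖q‖ < 1) (k : ℕ) : (1 : ℂ) - q * q ^ k ≠ 0 := by
  have habs : ‖q * q ^ k‖ < 1 := by
    rw [norm_mul, norm_pow]
    calc ‖q‖ * ‖q‖ ^ k ≤ ‖q‖ * 1 := by
          exact mul_le_mul_of_nonneg_left (pow_le_one₀ (norm_nonneg q) hq.le)
            (norm_nonneg q)
      _ = ‖q‖ := mul_one _
      _ < 1 := hq
  intro h
  rw [sub_eq_zero] at h
  rw [← h] at habs
  simp at habs

lemma aux_d1_ne {q μ₁ μ₂ : ℂ} (hμ₂ : μ₂ ≠ 0) (hμ : ∀ k : ℕ, 1 ≤ k → μ₂ ≠ q ^ k * μ₁)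
    (k : ℕ) : (1 : ℂ) - q * μ₁ / μ₂ * q ^ k ≠ 0 := by
  intro h
  rw [sub_eq_zero] at h
  field_simp at h
  exact hμ (k + 1) (Nat.le_add_left 1 k) (by linear_combination h)

lemma aux_Q2_ne {q : ℂ} (hq : ‖q‖ < 1) (k : ℕ) : qPoch q q k ≠ 0 :=
  Finset.prod_ne_zero_iff.mpr fun i _ => aux_d2_ne hq i

lemma aux_Q1_ne {q μ₁ μ₂ : ℂ} (hμ₂ : μ₂ ≠ 0) (hμ : ∀ k : ℕ, 1 ≤ k → μ₂ ≠ q ^ k * μ₁)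
    (k : ℕ) : qPoch (q * μ₁ / μ₂) q k ≠ 0 :=
  Finset.prod_ne_zero_iff.mpr fun i _ => aux_d1_ne hμ₂ hμ i

lemma aux_cc_succ {q η μ₁ μ₂ : ℂ} (hq : ‖q‖ < 1) (hμ₂ : μ₂ ≠ 0)
    (hμ : ∀ k : ℕ, 1 ≤ k → μ₂ ≠ q ^ k * μ₁) (k : ℕ) :
    ccAux q η μ₁ μ₂ (k + 1) = ccAux q η μ₁ μ₂ k *
      ((1 - η ^ 2 * q ^ k) * (1 - η ^ 2 * μ₁ / μ₂ * q ^ k) /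
        ((1 - q * μ₁ / μ₂ * q ^ k) * (1 - q * q ^ k))) := by
  unfold ccAux qPoch
  rw [Finset.prod_range_succ, Finset.prod_range_succ, Finset.prod_range_succ,
    Finset.prod_range_succ]
  have e1 := aux_Q1_ne hμ₂ hμ k
  have e2 := aux_Q2_ne hq k
  have e3 := aux_d1_ne hμ₂ hμ k
  have e4 := aux_d2_ne hq k
  unfold qPoch at e1 e2
  field_simp

lemma aux_summable {q η μ₁ μ₂ : ℂ} (hq : ‖q‖ < 1) (hμ₂ : μ₂ ≠ 0)
    (hμ : ∀ k : ℕ, 1 ≤ k → μ₂ ≠ q ^ k * μ₁) {u : ℂ} (hu : ‖u‖ < 1) :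
    Summable (fun k : ℕ => ccAux q η μ₁ μ₂ k * u ^ k) := by
  set r : ℝ := (‖u‖ + 1) / 2 with hr
  have hr1 : r < 1 := by rw [hr]; linarith
  have hur : ‖u‖ < r := by rw [hr]; linarith
  apply summable_of_ratio_norm_eventually_le hr1
  have hq0' : Tendsto (fun k : ℕ => q ^ k) atTop (𝓝 0) :=
    tendsto_pow_atTop_nhds_zero_of_norm_lt_one hq
  have h1 : Tendsto (fun k : ℕ => 1 - η ^ 2 * q ^ k) atTop (𝓝 1) := by
    simpa using tendsto_const_nhds.sub (hq0'.const_mul (η ^ 2))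
  have h2 : Tendsto (fun k : ℕ => 1 - η ^ 2 * μ₁ / μ₂ * q ^ k) atTop (𝓝 1) := by
    simpa using tendsto_const_nhds.sub (hq0'.const_mul (η ^ 2 * μ₁ / μ₂))
  have h3 : Tendsto (fun k : ℕ => 1 - q * μ₁ / μ₂ * q ^ k) atTop (𝓝 1) := by
    simpa using tendsto_const_nhds.sub (hq0'.const_mul (q * μ₁ / μ₂))
  have h4 : Tendsto (fun k : ℕ => 1 - q * q ^ k) atTop (𝓝 1) := by
    simpa using tendsto_const_nhds.sub (hq0'.const_mul q)
  have hR : Tendsto (fun k : ℕ =>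
      (1 - η ^ 2 * q ^ k) * (1 - η ^ 2 * μ₁ / μ₂ * q ^ k) /
        ((1 - q * μ₁ / μ₂ * q ^ k) * (1 - q * q ^ k)) * u) atTop (𝓝 u) := by
    have := (((h1.mul h2).div (h3.mul h4) (by norm_num)).mul_const u)
    simpa using this
  have hev : ∀ᶠ k : ℕ in atTop, ‖
      ((1 - η ^ 2 * q ^ k) * (1 - η ^ 2 * μ₁ / μ₂ * q ^ k) /
        ((1 - q * μ₁ / μ₂ * q ^ k) * (1 - q * q ^ k)) * u)‖ < r :=
    (hR.norm).eventually_lt_const hur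
  filter_upwards [hev] with k hk
  have key : ccAux q η μ₁ μ₂ (k + 1) * u ^ (k + 1) =
      (ccAux q η μ₁ μ₂ k * u ^ k) *
      ((1 - η ^ 2 * q ^ k) * (1 - η ^ 2 * μ₁ / μ₂ * q ^ k) /
        ((1 - q * μ₁ / μ₂ * q ^ k) * (1 - q * q ^ k)) * u) := by
    rw [aux_cc_succ hq hμ₂ hμ k, pow_succ u k]
    ring
  show ‖ccAux q η μ₁ μ₂ (k + 1) * u ^ (k + 1)‖ ≤ r * ‖ccAux q η μ₁ μ₂ k * u ^ k‖
  rw [key, norm_mul, mul_comm]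
  exact mul_le_mul_of_nonneg_right hk.le (norm_nonneg _)

lemma aux_cc_succ2 {q η μ₁ μ₂ : ℂ} (hq : ‖q‖ < 1) (hμ₂ : μ₂ ≠ 0)
    (hμ : ∀ k : ℕ, 1 ≤ k → μ₂ ≠ q ^ k * μ₁) (k : ℕ) :
    ccAux q η μ₁ μ₂ (k + 1) * ((μ₂ - q * μ₁ * q ^ k) * (1 - q * q ^ k)) =
      ccAux q η μ₁ μ₂ k * ((1 - η ^ 2 * q ^ k) * (μ₂ - η ^ 2 * μ₁ * q ^ k)) := by
  have e3 := aux_d1_ne hμ₂ hμ k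
  have e4 := aux_d2_ne hq k
  rw [aux_cc_succ hq hμ₂ hμ k, ← mul_div_assoc, div_mul_eq_mul_div,
    div_eq_iff (mul_ne_zero e3 e4)]
  field_simp

lemma aux_per_k {q η μ₁ μ₂ : ℂ} (hq : ‖q‖ < 1)
    (hμ₂ : μ₂ ≠ 0) (hμ : ∀ k : ℕ, 1 ≤ k → μ₂ ≠ q ^ k * μ₁) (v : ℂ) (k : ℕ) :
    μ₁ * (η ^ 2 * (η ^ 2 * v) - 1) * (ccAux q η μ₁ μ₂ k * (q * (q * v)) ^ k) +
      μ₂ * (v - 1) * (ccAux q η μ₁ μ₂ k * v ^ k) -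
      (μ₁ + μ₂) * (η ^ 2 * v - 1) * (ccAux q η μ₁ μ₂ k * (q * v) ^ k) =
    (μ₁ * (ccAux q η μ₁ μ₂ (k + 1) * (q * (q * v)) ^ (k + 1)) +
      μ₂ * (ccAux q η μ₁ μ₂ (k + 1) * v ^ (k + 1)) -
      (μ₁ + μ₂) * (ccAux q η μ₁ μ₂ (k + 1) * (q * v) ^ (k + 1))) -
    (μ₁ * (ccAux q η μ₁ μ₂ k * (q * (q * v)) ^ k) +
      μ₂ * (ccAux q η μ₁ μ₂ k * v ^ k) -
      (μ₁ + μ₂) * (ccAux q η μ₁ μ₂ k * (q * v) ^ k)) := by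
  have h := aux_cc_succ2 (η := η) hq hμ₂ hμ k
  simp only [mul_pow, pow_succ]
  linear_combination (-(v * v ^ k)) * h

/-- The main three-term functional identity for the vortex sum. -/
lemma aux_vortex_identity {q η μ₁ μ₂ : ℂ} (hq0 : q ≠ 0) (hq : ‖q‖ < 1)
    (hη : η ≠ 0) (hμ₂ : μ₂ ≠ 0) (hμ : ∀ k : ℕ, 1 ≤ k → μ₂ ≠ q ^ k * μ₁) {z : ℂ}
    (hz : ‖z‖ < ‖η ^ 2‖) :
    μ₁ * (η ^ 2 * z - 1) * tu2VortexSum q η μ₁ μ₂ (q * z) +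
      μ₂ * ((η ^ 2)⁻¹ * z - 1) * tu2VortexSum q η μ₁ μ₂ (z / q) =
    (μ₁ + μ₂) * (z - 1) * tu2VortexSum q η μ₁ μ₂ z := by
  have hX : (η : ℂ) ^ 2 ≠ 0 := pow_ne_zero 2 hη
  obtain ⟨v, hzv⟩ : ∃ v, z = η ^ 2 * v := ⟨(η ^ 2)⁻¹ * z, by field_simp⟩
  subst hzv
  have hXpos : 0 < ‖η ^ 2‖ := by
    simpa using norm_pos_iff.mpr hX
  have hv1 : ‖v‖ < 1 := by
    rw [norm_mul] at hz
    have := (mul_lt_iff_lt_one_right hXpos).mp hz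
    exact this
  have hqv : ‖q * v‖ < 1 := by
    rw [norm_mul]
    nlinarith [norm_nonneg q, norm_nonneg v]
  have hqqv : ‖q * (q * v)‖ < 1 := by
    rw [norm_mul]
    nlinarith [norm_nonneg q, norm_nonneg (q * v), hqv]
  have hS1 : Summable (fun k : ℕ => ccAux q η μ₁ μ₂ k * (q * (q * v)) ^ k) :=
    aux_summable hq hμ₂ hμ hqqv
  have hS2 : Summable (fun k : ℕ => ccAux q η μ₁ μ₂ k * v ^ k) :=
    aux_summable hq hμ₂ hμ hv1
  have hS0 : Summable (fun k : ℕ => ccAux q η μ₁ μ₂ k * (q * v) ^ k) :=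
    aux_summable hq hμ₂ hμ hqv
  have e1 : tu2VortexSum q η μ₁ μ₂ (q * (η ^ 2 * v)) =
      ∑' k : ℕ, ccAux q η μ₁ μ₂ k * (q * (q * v)) ^ k := by
    unfold tu2VortexSum
    exact tsum_congr fun k => by
      rw [show q * (η ^ 2)⁻¹ * (q * (η ^ 2 * v)) = q * (q * v) from by field_simp]
      rfl
  have e2 : tu2VortexSum q η μ₁ μ₂ (η ^ 2 * v / q) =
      ∑' k : ℕ, ccAux q η μ₁ μ₂ k * v ^ k := by
    unfold tu2VortexSum
    exact tsum_congr fun k => by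
      rw [show q * (η ^ 2)⁻¹ * (η ^ 2 * v / q) = v from by field_simp]
      rfl
  have e0 : tu2VortexSum q η μ₁ μ₂ (η ^ 2 * v) =
      ∑' k : ℕ, ccAux q η μ₁ μ₂ k * (q * v) ^ k := by
    unfold tu2VortexSum
    exact tsum_congr fun k => by
      rw [show q * (η ^ 2)⁻¹ * (η ^ 2 * v) = q * v from by field_simp]
      rfl
  rw [e1, e2, e0]
  rw [show (η ^ 2)⁻¹ * (η ^ 2 * v) - 1 = v - 1 from by field_simp]
  rw [← sub_eq_zero]
  set Φ : ℕ → ℂ := fun k => μ₁ * (ccAux q η μ₁ μ₂ k * (q * (q * v)) ^ k) +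
    μ₂ * (ccAux q η μ₁ μ₂ k * v ^ k) -
    (μ₁ + μ₂) * (ccAux q η μ₁ μ₂ k * (q * v) ^ k) with hΦdef
  have hΦ : Summable Φ :=
    ((hS1.mul_left μ₁).add (hS2.mul_left μ₂)).sub (hS0.mul_left (μ₁ + μ₂))
  have hΦ1 : Summable (fun k => Φ (k + 1)) := (summable_nat_add_iff 1).mpr hΦ
  have hΦ0 : Φ 0 = 0 := by
    simp [hΦdef, ccAux, qPoch]
  have comb : μ₁ * (η ^ 2 * (η ^ 2 * v) - 1) *
        (∑' k : ℕ, ccAux q η μ₁ μ₂ k * (q * (q * v)) ^ k) +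
      μ₂ * (v - 1) * (∑' k : ℕ, ccAux q η μ₁ μ₂ k * v ^ k) -
      (μ₁ + μ₂) * (η ^ 2 * v - 1) * (∑' k : ℕ, ccAux q η μ₁ μ₂ k * (q * v) ^ k) =
      ∑' k : ℕ, (μ₁ * (η ^ 2 * (η ^ 2 * v) - 1) * (ccAux q η μ₁ μ₂ k * (q * (q * v)) ^ k) +
        μ₂ * (v - 1) * (ccAux q η μ₁ μ₂ k * v ^ k) -
        (μ₁ + μ₂) * (η ^ 2 * v - 1) * (ccAux q η μ₁ μ₂ k * (q * v) ^ k)) := by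
    rw [Summable.tsum_sub ((hS1.mul_left _).add (hS2.mul_left _)) (hS0.mul_left _),
      Summable.tsum_add (hS1.mul_left _) (hS2.mul_left _), tsum_mul_left, tsum_mul_left,
      tsum_mul_left]
  rw [comb]
  have congrk : ∑' k : ℕ, (μ₁ * (η ^ 2 * (η ^ 2 * v) - 1) *
        (ccAux q η μ₁ μ₂ k * (q * (q * v)) ^ k) +
        μ₂ * (v - 1) * (ccAux q η μ₁ μ₂ k * v ^ k) -
        (μ₁ + μ₂) * (η ^ 2 * v - 1) * (ccAux q η μ₁ μ₂ k * (q * v) ^ k)) =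
      ∑' k : ℕ, (Φ (k + 1) - Φ k) :=
    tsum_congr fun k => aux_per_k hq hμ₂ hμ v k
  rw [congrk, Summable.tsum_sub hΦ1 hΦ, Summable.tsum_eq_zero_add hΦ, hΦ0]
  ring

lemma aux_ratio1 (c1 c3 T1 T2 T3 T4 S : ℂ) (h3 : T3 ≠ 0) (h4 : T4 ≠ 0)
    (hc3 : c3 ≠ 0) : c1 * T1 * T2 / (c3 * T3 * T4) * S =
      c1 / c3 * (T1 * T2 / (T3 * T4)) * S := by
  rcases eq_or_ne T1 0 with h | h1
  · simp [h]
  field_simp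

lemma aux_ratio2 (c2 c4 T1 T2 T3 T4 S : ℂ) (h3 : T3 ≠ 0) (h4 : T4 ≠ 0)
    (hc4 : c4 ≠ 0) : T1 * (c2 * T2) / (T3 * (c4 * T4)) * S =
      c2 / c4 * (T1 * T2 / (T3 * T4)) * S := by
  rcases eq_or_ne T2 0 with h | h2
  · simp [h]
  field_simp

lemma aux_ratio4 (c1 c2 c3 c4 T1 T2 T3 T4 S : ℂ) (h3 : T3 ≠ 0) (h4 : T4 ≠ 0)
    (hc3 : c3 ≠ 0) (hc4 : c4 ≠ 0) : c1 * T1 * (c2 * T2) / (c3 * T3 * (c4 * T4)) * S =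
      c1 * c2 / (c3 * c4) * (T1 * T2 / (T3 * T4)) * S := by
  rcases eq_or_ne T1 0 with h | h1
  · simp [h]
  rcases eq_or_ne T2 0 with h | h2
  · simp [h]
  field_simp

set_option maxHeartbeats 800000 in
/-- The theta-dressed holomorphic block of `T[U(2)]` is an eigenfunction of the
two quantized two-body trigonometric Ruijsenaars–Schneider Hamiltonians, with
eigenvalues `μ₁ + μ₂` and `μ₁μ₂`. -/
theorem tu2_block_tRS_eigenfunction (q η μ₁ μ₂ τ₁ τ₂ : ℂ)
    (hq0 : q ≠ 0) (hq : ‖q‖ < 1) (hη : η ≠ 0)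
    (hμ₁ : μ₁ ≠ 0) (hμ₂ : μ₂ ≠ 0) (hτ₁ : τ₁ ≠ 0) (hτ₂ : τ₂ ≠ 0)
    (hμ : ∀ k : ℕ, 1 ≤ k → μ₂ ≠ q ^ k * μ₁) (hττ : τ₁ ≠ τ₂)
    (hdom : ‖τ₁ / τ₂‖ < ‖η ^ 2‖)
    (hθ1 : thetaFn (μ₁ * τ₁) q ≠ 0) (hθ2 : thetaFn (μ₂ * τ₂) q ≠ 0) :
    (η * τ₁ - η⁻¹ * τ₂) / (τ₁ - τ₂) * tu2Block q η μ₁ μ₂ (q * τ₁) τ₂ +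
        (η * τ₂ - η⁻¹ * τ₁) / (τ₂ - τ₁) * tu2Block q η μ₁ μ₂ τ₁ (q * τ₂) =
      (μ₁ + μ₂) * tu2Block q η μ₁ μ₂ τ₁ τ₂ ∧
    tu2Block q η μ₁ μ₂ (q * τ₁) (q * τ₂) = μ₁ * μ₂ * tu2Block q η μ₁ μ₂ τ₁ τ₂ := by
  have hT12 : τ₁ - τ₂ ≠ 0 := sub_ne_zero.mpr hττ
  -- theta shift computations
  have sh1 : thetaFn (η⁻¹ * (q * τ₁)) q = -(η⁻¹ * τ₁)⁻¹ * thetaFn (η⁻¹ * τ₁) q := by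
    rw [show η⁻¹ * (q * τ₁) = q * (η⁻¹ * τ₁) from by ring]
    exact aux_theta_shift (by simp [hη, hτ₁]) hq0 hq
  have sh2 : thetaFn (η * (q * τ₂)) q = -(η * τ₂)⁻¹ * thetaFn (η * τ₂) q := by
    rw [show η * (q * τ₂) = q * (η * τ₂) from by ring]
    exact aux_theta_shift (by simp [hη, hτ₂]) hq0 hq
  have sh3 : thetaFn (μ₁ * (q * τ₁)) q = -(μ₁ * τ₁)⁻¹ * thetaFn (μ₁ * τ₁) q := by
    rw [show μ₁ * (q * τ₁) = q * (μ₁ * τ₁) from by ring]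
    exact aux_theta_shift (by simp [hμ₁, hτ₁]) hq0 hq
  have sh4 : thetaFn (μ₂ * (q * τ₂)) q = -(μ₂ * τ₂)⁻¹ * thetaFn (μ₂ * τ₂) q := by
    rw [show μ₂ * (q * τ₂) = q * (μ₂ * τ₂) from by ring]
    exact aux_theta_shift (by simp [hμ₂, hτ₂]) hq0 hq
  have hc1 : -(η⁻¹ * τ₁)⁻¹ / -(μ₁ * τ₁)⁻¹ = μ₁ * η := by field_simp
  have hc2 : -(η * τ₂)⁻¹ / -(μ₂ * τ₂)⁻¹ = μ₂ * η⁻¹ := by field_simp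
  have hc3 : -(η⁻¹ * τ₁)⁻¹ * -(η * τ₂)⁻¹ / (-(μ₁ * τ₁)⁻¹ * -(μ₂ * τ₂)⁻¹) = μ₁ * μ₂ := by
    field_simp
  have hn1 : -(μ₁ * τ₁)⁻¹ ≠ 0 := by simp [hμ₁, hτ₁]
  have hn2 : -(μ₂ * τ₂)⁻¹ ≠ 0 := by simp [hμ₂, hτ₂]
  -- block rewrites
  have b1 : tu2Block q η μ₁ μ₂ (q * τ₁) τ₂ = μ₁ * η *
      (thetaFn (η⁻¹ * τ₁) q * thetaFn (η * τ₂) q /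
        (thetaFn (μ₁ * τ₁) q * thetaFn (μ₂ * τ₂) q)) *
      tu2VortexSum q η μ₁ μ₂ (q * (τ₁ / τ₂)) := by
    unfold tu2Block
    rw [sh1, sh3, show q * τ₁ / τ₂ = q * (τ₁ / τ₂) from by ring,
      aux_ratio1 _ _ _ _ _ _ _ hθ1 hθ2 hn1, hc1]
  have b2 : tu2Block q η μ₁ μ₂ τ₁ (q * τ₂) = μ₂ * η⁻¹ *
      (thetaFn (η⁻¹ * τ₁) q * thetaFn (η * τ₂) q /
        (thetaFn (μ₁ * τ₁) q * thetaFn (μ₂ * τ₂) q)) *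
      tu2VortexSum q η μ₁ μ₂ (τ₁ / τ₂ / q) := by
    unfold tu2Block
    rw [sh2, sh4, show τ₁ / (q * τ₂) = τ₁ / τ₂ / q from by rw [div_div]; ring_nf,
      aux_ratio2 _ _ _ _ _ _ _ hθ1 hθ2 hn2, hc2]
  have b3 : tu2Block q η μ₁ μ₂ (q * τ₁) (q * τ₂) = μ₁ * μ₂ *
      (thetaFn (η⁻¹ * τ₁) q * thetaFn (η * τ₂) q /
        (thetaFn (μ₁ * τ₁) q * thetaFn (μ₂ * τ₂) q)) *
      tu2VortexSum q η μ₁ μ₂ (τ₁ / τ₂) := by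
    unfold tu2Block
    rw [sh1, sh2, sh3, sh4, show q * τ₁ / (q * τ₂) = τ₁ / τ₂ from
        mul_div_mul_left τ₁ τ₂ hq0,
      aux_ratio4 _ _ _ _ _ _ _ _ _ hθ1 hθ2 hn1 hn2, hc3]
  set Θ : ℂ := thetaFn (η⁻¹ * τ₁) q * thetaFn (η * τ₂) q /
      (thetaFn (μ₁ * τ₁) q * thetaFn (μ₂ * τ₂) q) with hΘ
  have b0 : tu2Block q η μ₁ μ₂ τ₁ τ₂ = Θ * tu2VortexSum q η μ₁ μ₂ (τ₁ / τ₂) := rfl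
  clear_value Θ
  constructor
  · -- first Hamiltonian
    have hvid := aux_vortex_identity (μ₁ := μ₁) hq0 hq hη hμ₂ hμ hdom
    rw [b1, b2, b0]
    -- reduce to scalar identity
    set A := tu2VortexSum q η μ₁ μ₂ (q * (τ₁ / τ₂)) with hA
    set B := tu2VortexSum q η μ₁ μ₂ (τ₁ / τ₂ / q) with hB
    set Cs := tu2VortexSum q η μ₁ μ₂ (τ₁ / τ₂) with hC
    clear_value A B Cs
    have scalar : (η * τ₁ - η⁻¹ * τ₂) / (τ₁ - τ₂) * (μ₁ * η * A) +
        (η * τ₂ - η⁻¹ * τ₁) / (τ₂ - τ₁) * (μ₂ * η⁻¹ * B) =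
        (μ₁ + μ₂) * Cs := by
      have hτ21 : τ₂ - τ₁ ≠ 0 := fun h => hT12 (by linear_combination -h)
      field_simp at hvid ⊢
      apply mul_left_cancel₀ (pow_ne_zero 2 hτ₂)
      linear_combination (τ₂ ^ 2 * (τ₂ - τ₁)) * hvid
    linear_combination Θ * scalar
  · -- second Hamiltonian
    rw [b3, b0]
    ring
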